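/- There exists a finite join-semilattice with at least one maximal ideal but no prime ideals. Concretely, the join-semilattice of subsets {xyz, xy, xz, yz, ∅} of a three-element set {x,y,z} (ordered by inclusion, with join = union) has three maximal ideals and no prime ideals. -/
import Mathlib


/-- `I` is an ideal of the join-semilattice `L ⊆ 𝒫 X` (ordered by inclusion,
join = union): a subset of `L` that is a down-set in `L` and closed under unions. -/
def IsIdealIn {X : Type*} (L I : Set (Set X)) : Prop :=
  I ⊆ L ∧ (∀ a ∈ I, ∀ b ∈ L, b ⊆ a → b ∈ I) ∧ (∀ a ∈ I, ∀ b ∈ I, a ∪ b ∈ I)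

/-- `F` is a filter of `L`: a nonempty up-set in `L` containing a lower bound
for any two of its elements. -/
def IsFilterIn {X : Type*} (L F : Set (Set X)) : Prop :=
  F ⊆ L ∧ F.Nonempty ∧ (∀ a ∈ F, ∀ b ∈ L, a ⊆ b → b ∈ F) ∧
    (∀ a ∈ F, ∀ b ∈ F, ∃ c ∈ F, c ⊆ a ∧ c ⊆ b)

/-- A prime ideal: a nonempty ideal whose complement (in `L`) is a filter. -/
def IsPrimeIdealIn {X : Type*} (L I : Set (Set X)) : Prop :=
  IsIdealIn L I ∧ I.Nonempty ∧ IsFilterIn L (L \ I)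

/-- A maximal ideal: an ideal not containing the top element `univ`, every
strictly larger ideal of `L` containing `univ`. -/
def IsMaxIdealIn {X : Type*} (L I : Set (Set X)) : Prop :=
  IsIdealIn L I ∧ Set.univ ∉ I ∧ ∀ J, IsIdealIn L J → I ⊂ J → Set.univ ∈ J

lemma max_helper {X : Type*} (L : Set (Set X)) (p q r : Set X)
    (hL : L = {Set.univ, p, q, r, ∅} ∨ L = {Set.univ, q, p, r, ∅} ∨
          L = {Set.univ, q, r, p, ∅})
    (hqp : ¬ q ⊆ p) (hrp : ¬ r ⊆ p) (hup : ¬ (Set.univ : Set X) ⊆ p)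
    (hpq : p ∪ q = Set.univ) (hpr : p ∪ r = Set.univ) :
    IsMaxIdealIn L {p, ∅} := by
  have hpL : p ∈ L := by rcases hL with h|h|h <;> simp [h]
  have hmemL : ∀ b ∈ L, b = Set.univ ∨ b = p ∨ b = q ∨ b = r ∨ b = ∅ := by
    intro b hb
    rcases hL with h|h|h <;> (rw [h] at hb; simp at hb; tauto)
  have hideal : IsIdealIn L {p, ∅} := by
    refine ⟨?_, ?_, ?_⟩
    · intro a ha
      rcases ha with ha|ha <;> subst ha
      · exact hpL
      · rcases hL with h|h|h <;> simp [h]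
    · intro a ha b hb hba
      rcases ha with ha|ha <;> subst ha
      · rcases hmemL b hb with h|h|h|h|h <;> subst h
        · exact absurd hba hup
        · exact Or.inl rfl
        · exact absurd hba hqp
        · exact absurd hba hrp
        · exact Or.inr rfl
      · right; exact Set.subset_eq_empty hba rfl
    · intro a ha b hb
      rcases ha with ha|ha <;> rcases hb with hb|hb <;> subst ha <;> subst hb <;> simp
  refine ⟨hideal, ?_, ?_⟩
  · intro h
    rcases h with h|h
    · exact hup h.subset
    · exact hup (by rw [h]; exact Set.empty_subset p)
  · intro J hJ hsub
    obtain ⟨hsub', hne⟩ := hsub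
    obtain ⟨x, hxJ, hxm⟩ := Set.not_subset.mp hne
    rcases hmemL x (hJ.1 hxJ) with h|h|h|h|h <;> subst h
    · exact hxJ
    · exact absurd (Or.inl rfl) hxm
    · have hp : p ∈ J := hsub' (Or.inl rfl)
      have := hJ.2.2 p hp _ hxJ
      rwa [hpq] at this
    · have hp : p ∈ J := hsub' (Or.inl rfl)
      have := hJ.2.2 p hp _ hxJ
      rwa [hpr] at this
    · exact absurd (Or.inr rfl) hxm


/-- The join-semilattice `{xyz, xy, xz, yz, ∅}` of subsets of a three-element
set has three (distinct) maximal ideals but no prime ideals. -/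
theorem finite_semilattice_with_maximal_but_no_prime_ideals
    (L : Set (Set (Fin 3)))
    (hL : L = {Set.univ, {0, 1}, {0, 2}, {1, 2}, ∅}) :
    (∃ m₁ m₂ m₃ : Set (Set (Fin 3)), m₁ ≠ m₂ ∧ m₁ ≠ m₃ ∧ m₂ ≠ m₃ ∧
      IsMaxIdealIn L m₁ ∧ IsMaxIdealIn L m₂ ∧ IsMaxIdealIn L m₃) ∧
    ∀ I : Set (Set (Fin 3)), ¬ IsPrimeIdealIn L I := by
  have h2A : (2 : Fin 3) ∉ ({0,1} : Set (Fin 3)) := by simp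
  have h1B : (1 : Fin 3) ∉ ({0,2} : Set (Fin 3)) := by simp
  have h0C : (0 : Fin 3) ∉ ({1,2} : Set (Fin 3)) := by simp
  have hBA : ¬ ({0,2} : Set (Fin 3)) ⊆ {0,1} := fun h => h2A (h (by simp))
  have hCA : ¬ ({1,2} : Set (Fin 3)) ⊆ {0,1} := fun h => h2A (h (by simp))
  have hAB : ¬ ({0,1} : Set (Fin 3)) ⊆ {0,2} := fun h => h1B (h (by simp))
  have hCB : ¬ ({1,2} : Set (Fin 3)) ⊆ {0,2} := fun h => h1B (h (by simp))
  have hAC : ¬ ({0,1} : Set (Fin 3)) ⊆ {1,2} := fun h => h0C (h (by simp))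
  have hBC : ¬ ({0,2} : Set (Fin 3)) ⊆ {1,2} := fun h => h0C (h (by simp))
  have huA : ¬ (Set.univ : Set (Fin 3)) ⊆ {0,1} := fun h => h2A (h trivial)
  have huB : ¬ (Set.univ : Set (Fin 3)) ⊆ {0,2} := fun h => h1B (h trivial)
  have huC : ¬ (Set.univ : Set (Fin 3)) ⊆ {1,2} := fun h => h0C (h trivial)
  have hABu : ({0,1} : Set (Fin 3)) ∪ {0,2} = Set.univ := by ext i; fin_cases i <;> simp
  have hACu : ({0,1} : Set (Fin 3)) ∪ {1,2} = Set.univ := by ext i; fin_cases i <;> simp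
  have hBCu : ({0,2} : Set (Fin 3)) ∪ {1,2} = Set.univ := by ext i; fin_cases i <;> simp
  have hAe : ({0,1} : Set (Fin 3)) ≠ ∅ := by
    intro h; rw [Set.eq_empty_iff_forall_notMem] at h; exact h 0 (by simp)
  have hBe : ({0,2} : Set (Fin 3)) ≠ ∅ := by
    intro h; rw [Set.eq_empty_iff_forall_notMem] at h; exact h 0 (by simp)
  have hm1 : IsMaxIdealIn L {({0,1} : Set (Fin 3)), ∅} :=
    max_helper L _ {0,2} {1,2} (Or.inl hL) hBA hCA huA hABu hACu
  have hm2 : IsMaxIdealIn L {({0,2} : Set (Fin 3)), ∅} :=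
    max_helper L _ {0,1} {1,2} (Or.inr (Or.inl hL)) hAB hCB huB
      (by rw [Set.union_comm]; exact hABu) hBCu
  have hm3 : IsMaxIdealIn L {({1,2} : Set (Fin 3)), ∅} :=
    max_helper L _ {0,1} {0,2} (Or.inr (Or.inr hL)) hAC hBC huC
      (by rw [Set.union_comm]; exact hACu) (by rw [Set.union_comm]; exact hBCu)
  constructor
  · refine ⟨_, _, _, ?_, ?_, ?_, hm1, hm2, hm3⟩
    · intro h
      have : ({0,1} : Set (Fin 3)) ∈ ({({0,2} : Set (Fin 3)), ∅} : Set (Set (Fin 3))) := by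
        rw [← h]; exact Or.inl rfl
      rcases this with h'|h'
      · exact h1B (h' ▸ (by simp : (1:Fin 3) ∈ ({0,1} : Set (Fin 3))))
      · exact hAe h'
    · intro h
      have : ({0,1} : Set (Fin 3)) ∈ ({({1,2} : Set (Fin 3)), ∅} : Set (Set (Fin 3))) := by
        rw [← h]; exact Or.inl rfl
      rcases this with h'|h'
      · exact h0C (h' ▸ (by simp : (0:Fin 3) ∈ ({0,1} : Set (Fin 3))))
      · exact hAe h'
    · intro h
      have : ({0,2} : Set (Fin 3)) ∈ ({({1,2} : Set (Fin 3)), ∅} : Set (Set (Fin 3))) := by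
        rw [← h]; exact Or.inl rfl
      rcases this with h'|h'
      · exact h0C (h' ▸ (by simp : (0:Fin 3) ∈ ({0,2} : Set (Fin 3))))
      · exact hBe h'
  · rintro I ⟨hId, ⟨a, haI⟩, hFsub, ⟨f, hfF⟩, hFup, hFlb⟩
    -- ∅ ∈ I
    have hemL : (∅ : Set (Fin 3)) ∈ L := by simp [hL]
    have hempI : (∅ : Set (Fin 3)) ∈ I := hId.2.1 a haI ∅ hemL (Set.empty_subset a)
    -- univ ∈ F
    have huL : (Set.univ : Set (Fin 3)) ∈ L := by simp [hL]
    have huF : (Set.univ : Set (Fin 3)) ∈ L \ I := hFup f hfF _ huL (Set.subset_univ f)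
    have huI : (Set.univ : Set (Fin 3)) ∉ I := huF.2
    have memL : ∀ b ∈ L, b = Set.univ ∨ b = {0,1} ∨ b = {0,2} ∨ b = {1,2} ∨ b = ∅ := by
      intro b hb; rw [hL] at hb; simpa using hb
    by_cases hA : ({0,1} : Set (Fin 3)) ∈ I
    · have hBI : ({0,2} : Set (Fin 3)) ∉ I := fun h => huI (hABu ▸ hId.2.2 _ hA _ h)
      have hCI : ({1,2} : Set (Fin 3)) ∉ I := fun h => huI (hACu ▸ hId.2.2 _ hA _ h)
      obtain ⟨c, hcF, hcp, hcq⟩ := hFlb {0,2} ⟨by simp [hL], hBI⟩ {1,2} ⟨by simp [hL], hCI⟩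
      rcases memL c hcF.1 with h|h|h|h|h <;> subst h
      · exact huB hcp
      · exact hAB hcp
      · exact hBC hcq
      · exact hCB hcp
      · exact hcF.2 hempI
    · by_cases hB : ({0,2} : Set (Fin 3)) ∈ I
      · have hCI : ({1,2} : Set (Fin 3)) ∉ I := fun h => huI (hBCu ▸ hId.2.2 _ hB _ h)
        obtain ⟨c, hcF, hcp, hcq⟩ := hFlb {0,1} ⟨by simp [hL], hA⟩ {1,2} ⟨by simp [hL], hCI⟩
        rcases memL c hcF.1 with h|h|h|h|h <;> subst h
        · exact huA hcp
        · exact hAC hcq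
        · exact hBA hcp
        · exact hCA hcp
        · exact hcF.2 hempI
      · obtain ⟨c, hcF, hcp, hcq⟩ := hFlb {0,1} ⟨by simp [hL], hA⟩ {0,2} ⟨by simp [hL], hB⟩
        rcases memL c hcF.1 with h|h|h|h|h <;> subst h
        · exact huA hcp
        · exact hAB hcq
        · exact hBA hcp
        · exact hCA hcp
        · exact hcF.2 hempI
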